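/- Let G be a topological group. Then there exists a subgroup H ⊆ G such that H, equipped with the subspace topology, is extremely amenable, and H is maximal among extremely amenable subgroups: for every subgroup H' of G with H ⊆ H' such that H' is extremely amenable in the subspace topology, one has H' = H. -/

import Mathlib

/-- A topological group `G` is *extremely amenable* if every continuous action of `G`
on a nonempty compact Hausdorff space has a `G`-fixed point. -/
def ExtremelyAmenable (G : Type) [Group G] [TopologicalSpace G] : Prop :=
  ∀ (X : Type) [TopologicalSpace X] [CompactSpace X] [T2Space X] [Nonempty X]
    [MulAction G X] [ContinuousSMul G X], ∃ x : X, ∀ g : G, g • x = x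

/-- The pair `(G, H)` is *relatively extremely amenable* if every continuous action of `G`
on a nonempty compact Hausdorff space has a point fixed by every element of `H`. -/
def RelativelyExtremelyAmenable (G : Type) [Group G] [TopologicalSpace G] (H : Subgroup G) :
    Prop :=
  ∀ (X : Type) [TopologicalSpace X] [CompactSpace X] [T2Space X] [Nonempty X]
    [MulAction G X] [ContinuousSMul G X], ∃ x : X, ∀ h ∈ H, h • x = x

/-- The trivial subgroup is extremely amenable. -/
lemma extremelyAmenable_bot (G : Type) [Group G] [TopologicalSpace G] :
    ExtremelyAmenable ↥(⊥ : Subgroup G) := by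
  intro X _ _ _ _ _ _
  obtain ⟨x⟩ := ‹Nonempty X›
  refine ⟨x, fun g => ?_⟩
  have : g = 1 := Subtype.ext (Subgroup.mem_bot.mp g.2)
  rw [this, one_smul]

/-- Every topological group `G` admits a subgroup `H` that is extremely amenable in the
subspace topology and maximal among such subgroups. -/
theorem exists_maximally_extremelyAmenable_subgroup
    (G : Type) [Group G] [TopologicalSpace G] [IsTopologicalGroup G] :
    ∃ H : Subgroup G, ExtremelyAmenable ↥H ∧
      ∀ H' : Subgroup G, H ≤ H' → ExtremelyAmenable ↥H' → H' = H := by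
  have key : ∀ c ⊆ {H : Subgroup G | ExtremelyAmenable ↥H}, IsChain (· ≤ ·) c →
      ∀ y ∈ c, ∃ ub ∈ {H : Subgroup G | ExtremelyAmenable ↥H}, ∀ z ∈ c, z ≤ ub := ?_
  · obtain ⟨m, -, hms, hmax⟩ :=
      zorn_le_nonempty₀ {H : Subgroup G | ExtremelyAmenable ↥H} key ⊥ (extremelyAmenable_bot G)
    exact ⟨m, hms, fun H' h1 h2 => (hmax h2 h1).antisymm h1⟩
  rintro c hc hchain H₀ hH₀
  refine ⟨sSup c, ?_, fun z hz => le_sSup hz⟩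
  -- the sup of a nonempty chain of extremely amenable subgroups is extremely amenable
  intro X _ _ _ _ _ _
  have hcne : c.Nonempty := ⟨H₀, hH₀⟩
  have hdir : DirectedOn (· ≤ ·) c := hchain.directedOn
  -- fixed-point sets
  set F : c → Set X := fun H => {x : X | ∀ g : G, ∀ hg : g ∈ (H : Subgroup G),
    (⟨g, le_sSup H.2 hg⟩ : ↥(sSup c)) • x = x} with hF
  haveI : Nonempty c := hcne.to_subtype
  have hclosed : ∀ H : c, IsClosed (F H) := by
    intro H
    have : F H = ⋂ (g : G) (hg : g ∈ (H : Subgroup G)),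
        {x : X | (⟨g, le_sSup H.2 hg⟩ : ↥(sSup c)) • x = x} := by
      ext x; simp [hF, Set.mem_iInter]
    rw [this]
    refine isClosed_iInter fun g => isClosed_iInter fun hg => ?_
    exact isClosed_eq (continuous_const_smul _) continuous_id
  have hne : ∀ H : c, (F H).Nonempty := by
    rintro ⟨H, hHc⟩
    have hle : H ≤ sSup c := le_sSup hHc
    letI : MulAction ↥H X := MulAction.compHom X (Subgroup.inclusion hle)
    have hincl : Continuous (Subgroup.inclusion hle : ↥H → ↥(sSup c)) :=
      continuous_induced_rng.mpr continuous_subtype_val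
    haveI : ContinuousSMul ↥H X := by
      constructor
      have : (fun p : ↥H × X => p.1 • p.2)
          = fun p : ↥H × X => (Subgroup.inclusion hle p.1) • p.2 := rfl
      rw [this]
      exact continuous_smul.comp ((hincl.comp continuous_fst).prodMk continuous_snd)
    obtain ⟨x, hx⟩ := hc hHc X
    refine ⟨x, fun g hg => ?_⟩
    exact hx ⟨g, hg⟩
  have hdirF : Directed (· ⊇ ·) F := by
    rintro ⟨H₁, h₁⟩ ⟨H₂, h₂⟩
    obtain ⟨H₃, h₃, le₁, le₂⟩ := hdir H₁ h₁ H₂ h₂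
    exact ⟨⟨H₃, h₃⟩, fun x hx g hg => hx g (le₁ hg), fun x hx g hg => hx g (le₂ hg)⟩
  obtain ⟨x, hx⟩ := IsCompact.nonempty_iInter_of_directed_nonempty_isCompact_isClosed
    F hdirF hne (fun H => (hclosed H).isCompact) hclosed
  refine ⟨x, fun g => ?_⟩
  obtain ⟨g, hg⟩ := g
  obtain ⟨H, hHc, hgH⟩ := (Subgroup.mem_sSup_of_directedOn hcne hdir).mp hg
  simpa using Set.mem_iInter.mp hx ⟨H, hHc⟩ g hgH
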